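/- Let X be a geodesic metric space in which every geodesic triangle is δ-slim, let g be a surjective isometry of X, and let α ∈ X be a point such that for every geodesic segment σ from g^{-1}(α) to g(α) the distance from α to σ is at most 2δ. Then the asymptotic translation length of g satisfies |g| ≥ d(α, g(α)) − 8δ. -/

import Mathlib

open Filter Topology Metric

/-- A geodesic segment in a metric space: the image of an isometric embedding of the
real interval `[0, dist x y]` sending the endpoints to `x` and `y`. -/
def IsGeodesicSegment {X : Type*} [MetricSpace X] (s : Set X) (x y : X) : Prop :=
  ∃ f : ℝ → X, f 0 = x ∧ f (dist x y) = y ∧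
    (∀ a ∈ Set.Icc 0 (dist x y), ∀ b ∈ Set.Icc 0 (dist x y), dist (f a) (f b) = |a - b|) ∧
    s = f '' Set.Icc 0 (dist x y)

/-- A geodesic metric space: any two points are joined by a geodesic segment. -/
def GeodesicSpace (X : Type*) [MetricSpace X] : Prop :=
  ∀ x y : X, ∃ s : Set X, IsGeodesicSegment s x y

/-- Geodesic triangles are `δ`-slim: each side is contained in the closed
`δ`-neighbourhood of the union of the other two sides. -/
def SlimTriangles (X : Type*) [MetricSpace X] (δ : ℝ) : Prop :=
  ∀ x y z : X, ∀ sxy syz szx : Set X,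
    IsGeodesicSegment sxy x y → IsGeodesicSegment syz y z → IsGeodesicSegment szx z x →
    ∀ p ∈ sxy, Metric.infDist p (syz ∪ szx) ≤ δ


lemma geo_image {X : Type*} [MetricSpace X] (φ : X ≃ X) (hφ : Isometry ⇑φ)
    {s : Set X} {x y : X} (h : IsGeodesicSegment s x y) :
    IsGeodesicSegment (⇑φ '' s) (φ x) (φ y) := by
  obtain ⟨f, h0, hD, hiso, hs⟩ := h
  have hd : dist (φ x) (φ y) = dist x y := hφ.dist_eq x y
  refine ⟨⇑φ ∘ f, by simp [h0], ?_, ?_, ?_⟩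
  · rw [hd]; simp [hD]
  · intro a ha b hb
    rw [hd] at ha hb
    simp [Function.comp, hφ.dist_eq, hiso a ha b hb]
  · rw [hd, hs, Set.image_comp]

lemma geo_self {X : Type*} [MetricSpace X] (x : X) : IsGeodesicSegment {x} x x := by
  refine ⟨fun _ => x, rfl, rfl, ?_, ?_⟩
  · intro a ha b hb
    simp at ha hb
    simp [ha, hb]
  · simp

lemma geo_compact {X : Type*} [MetricSpace X] {s : Set X} {x y : X}
    (h : IsGeodesicSegment s x y) : IsCompact s ∧ s.Nonempty := by
  obtain ⟨f, h0, hD, hiso, hs⟩ := h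
  have hc : ContinuousOn f (Set.Icc 0 (dist x y)) := by
    intro a ha
    apply ContinuousWithinAt.mono (s := Set.Icc 0 (dist x y)) ?_ le_rfl
    rw [Metric.continuousWithinAt_iff]
    intro ε hε
    exact ⟨ε, hε, fun b hb hab => by rw [hiso b hb a ha]; rwa [Real.dist_eq] at hab⟩
  refine ⟨hs ▸ (isCompact_Icc.image_of_continuousOn hc), ?_⟩
  exact hs ▸ ⟨f 0, Set.mem_image_of_mem f (Set.left_mem_Icc.2 dist_nonneg)⟩

lemma geo_dist_add {X : Type*} [MetricSpace X] {s : Set X} {x y : X}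
    (h : IsGeodesicSegment s x y) : ∀ q ∈ s, dist x q + dist q y = dist x y := by
  obtain ⟨f, h0, hD, hiso, hs⟩ := h
  intro q hq
  rw [hs] at hq
  obtain ⟨t, ht, rfl⟩ := hq
  have h1 : dist x (f t) = t := by
    rw [← h0, hiso 0 (Set.left_mem_Icc.2 dist_nonneg) t ht]
    rw [abs_sub_comm, abs_of_nonneg (by simpa using ht.1)]
    simp
  have h2 : dist (f t) y = dist x y - t := by
    have := hiso t ht (dist x y) (Set.right_mem_Icc.2 dist_nonneg)
    rw [hD] at this
    rw [this, abs_of_nonpos (by linarith [ht.2])]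
    ring
  rw [h1, h2]; ring

/-- In a geodesic space with `δ`-slim triangles, if `g` is a surjective isometry and
`α` a point lying within `2δ` of every geodesic from `g⁻¹ α` to `g α`, then the
asymptotic translation length of `g` is at least `dist α (g α) - 8δ`. -/
theorem translation_length_lower_bound
    {X : Type*} [MetricSpace X] (δ : ℝ)
    (hgeo : GeodesicSpace X) (hslim : SlimTriangles X δ)
    (g : Equiv.Perm X) (hg : Isometry g)
    (α : X)
    (hα : ∀ σ : Set X, IsGeodesicSegment σ (g⁻¹ α) (g α) → Metric.infDist α σ ≤ 2 * δ)
    (L : ℝ)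
    (hL : ∀ x : X, Tendsto (fun n : ℕ => dist x ((g ^ n) x) / n) atTop (𝓝 L)) :
    dist α (g α) - 8 * δ ≤ L := by
  have hδ : 0 ≤ δ := by
    have := hslim α α α {α} {α} {α} (geo_self α) (geo_self α) (geo_self α) α rfl
    simpa using this
  set d := dist α (g α) with hd
  have hL0 : 0 ≤ L := by
    refine ge_of_tendsto (hL α) ?_
    filter_upwards with n
    positivity
  by_cases hd7 : d ≤ 7 * δ
  · linarith
  push_neg at hd7
  -- isometry of powers
  have hgp : ∀ n : ℕ, Isometry ⇑(g ^ n) := by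
    intro n
    induction n with
    | zero => simpa using isometry_id
    | succ n ih =>
      intro a b
      rw [pow_succ]
      simp only [Equiv.Perm.mul_apply]
      rw [ih.edist_eq, hg.edist_eq]
  have hgi : ∀ n : ℕ, Isometry ⇑((g ^ n)⁻¹ : Equiv.Perm X) := by
    intro n a b
    have := (hgp n).edist_eq (((g ^ n)⁻¹ : Equiv.Perm X) a) (((g ^ n)⁻¹ : Equiv.Perm X) b)
    simpa [Equiv.apply_symm_apply] using this.symm
  have hcons : ∀ n : ℕ, dist ((g ^ n) α) ((g ^ (n + 1)) α) = d := by
    intro n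
    have : (g ^ (n + 1)) α = (g ^ n) (g α) := by
      rw [pow_succ]; simp [Equiv.Perm.mul_apply]
    rw [this, (hgp n).dist_eq]
  -- the midpoint is 2δ-close to any geodesic between its neighbours
  have hmid : ∀ n : ℕ, ∀ τ : Set X, IsGeodesicSegment τ ((g ^ n) α) ((g ^ (n + 2)) α) →
      Metric.infDist ((g ^ (n + 1)) α) τ ≤ 2 * δ := by
    intro n τ hτ
    set h : Equiv.Perm X := g ^ (n + 1) with hh
    have e1 : (h⁻¹) ((g ^ n) α) = g⁻¹ α := by
      have : h⁻¹ * g ^ n = g⁻¹ := by rw [hh]; group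
      rw [← Equiv.Perm.mul_apply, this]
    have e2 : (h⁻¹) ((g ^ (n + 2)) α) = g α := by
      have : h⁻¹ * g ^ (n + 2) = g := by rw [hh]; group
      rw [← Equiv.Perm.mul_apply, this]
    have hσ : IsGeodesicSegment (⇑(h⁻¹) '' τ) (g⁻¹ α) (g α) := by
      have := geo_image (h⁻¹ : Equiv.Perm X) (hgi (n + 1)) hτ
      rwa [e1, e2] at this
    have himg : ⇑h '' (⇑(h⁻¹) '' τ) = τ := by
      rw [← Set.image_comp]
      have : ⇑h ∘ ⇑(h⁻¹) = id := funext fun z => Equiv.apply_symm_apply h z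
      rw [this, Set.image_id]
    have := hα _ hσ
    rwa [← Metric.infDist_image (hgp (n + 1)), himg] at this
  -- key inductive estimate
  have key : ∀ n : ℕ, dist α ((g ^ n) α) + (d - 8 * δ) ≤ dist α ((g ^ (n + 1)) α) := by
    intro n
    induction n with
    | zero =>
      have h1 : dist α ((g ^ 1) α) = d := by simp [hd]
      simp only [pow_zero, Equiv.Perm.one_apply, dist_self]
      rw [h1]; linarith
    | succ n ih =>
      obtain ⟨τ, hτ⟩ := hgeo ((g ^ n) α) ((g ^ (n + 2)) α)
      obtain ⟨γ, hγ⟩ := hgeo ((g ^ (n + 2)) α) α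
      obtain ⟨ρ, hρ⟩ := hgeo α ((g ^ n) α)
      obtain ⟨hτc, hτne⟩ := geo_compact hτ
      obtain ⟨p, hpτ, hp⟩ := hτc.exists_infDist_eq_dist hτne ((g ^ (n + 1)) α)
      have hp2 : dist ((g ^ (n + 1)) α) p ≤ 2 * δ := hp ▸ hmid n τ hτ
      have hsl := hslim ((g ^ n) α) ((g ^ (n + 2)) α) α τ γ ρ hτ hγ hρ p hpτ
      have hucomp : IsCompact (γ ∪ ρ) := (geo_compact hγ).1.union (geo_compact hρ).1
      obtain ⟨q, hq, hqd⟩ := hucomp.exists_infDist_eq_dist ((geo_compact hγ).2.inl) p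
      have hq3 : dist ((g ^ (n + 1)) α) q ≤ 3 * δ := by
        calc dist ((g ^ (n + 1)) α) q ≤ dist ((g ^ (n + 1)) α) p + dist p q := dist_triangle _ _ _
        _ ≤ 2 * δ + δ := by rw [← hqd]; exact add_le_add hp2 hsl
        _ = 3 * δ := by ring
      have hc1 : dist ((g ^ (n + 1)) α) ((g ^ (n + 2)) α) = d := hcons (n + 1)
      cases hq with
      | inl hqγ =>
        have hsum := geo_dist_add hγ q hqγ
        have t1 : dist ((g ^ (n + 2)) α) ((g ^ (n + 1)) α) ≤
            dist ((g ^ (n + 2)) α) q + dist q ((g ^ (n + 1)) α) := dist_triangle _ _ _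
        have t2 : dist α ((g ^ (n + 1)) α) ≤ dist α q + dist q ((g ^ (n + 1)) α) :=
          dist_triangle _ _ _
        rw [dist_comm ((g ^ (n + 2)) α) ((g ^ (n + 1)) α), hc1] at t1
        rw [dist_comm q ((g ^ (n + 1)) α)] at t1 t2
        rw [dist_comm α q] at t2
        have t3 : dist α ((g ^ (n + 2)) α) = dist ((g ^ (n + 2)) α) α := dist_comm _ _
        linarith
      | inr hqρ =>
        exfalso
        have hsum := geo_dist_add hρ q hqρ
        have t1 : dist ((g ^ (n + 1)) α) ((g ^ n) α) ≤
            dist ((g ^ (n + 1)) α) q + dist q ((g ^ n) α) := dist_triangle _ _ _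
        have t2 : dist α ((g ^ (n + 1)) α) ≤ dist α q + dist q ((g ^ (n + 1)) α) :=
          dist_triangle _ _ _
        have hc0 : dist ((g ^ n) α) ((g ^ (n + 1)) α) = d := hcons n
        rw [dist_comm ((g ^ (n + 1)) α) ((g ^ n) α), hc0] at t1
        rw [dist_comm q ((g ^ (n + 1)) α)] at t2
        linarith
  have hlin : ∀ n : ℕ, (n : ℝ) * (d - 8 * δ) ≤ dist α ((g ^ n) α) := by
    intro n
    induction n with
    | zero => simp
    | succ n ih =>
      have := key n
      have hcast : ((n + 1 : ℕ) : ℝ) = (n : ℝ) + 1 := by push_cast; ring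
      rw [hcast]
      nlinarith
  refine ge_of_tendsto (hL α) ?_
  filter_upwards [eventually_ge_atTop 1] with n hn
  have hn0 : (0 : ℝ) < n := by exact_mod_cast hn
  rw [le_div_iff₀ hn0]
  calc (d - 8 * δ) * n = (n : ℝ) * (d - 8 * δ) := by ring
  _ ≤ dist α ((g ^ n) α) := hlin n
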